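/- (Hessian operator identity) For F∈C^∞ on the interior of the probability simplex and zero-sum σ₁,σ₂, the Riemannian Hessian of the Wasserstein metric satisfies Hess_W F(ρ)(σ₁,σ₂) = σ₁ᵀ d²_ρF(ρ) σ₂ + (1/2){ d_ρF(ρ)ᵀL(σ₁)L(ρ)^†σ₂ + d_ρF(ρ)ᵀL(σ₂)L(ρ)^†σ₁ − d_ρF(ρ)ᵀL(ρ)(∇_GL(ρ)^†σ₁ ∘ ∇_GL(ρ)^†σ₂) }, where Hess_W F(σ₁,σ₂)=σ₂(g_W(σ₁,∇_WF)) − g_W(∇^W_{σ₂}σ₁, ∇_WF). -/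

import Mathlib

open Matrix

/-- Discrete gradient matrix `D ∈ ℝ^{|E|×n}` with entries `±√ω_{ij}`. -/
noncomputable def gradMat {n : ℕ} {E : Type} (sE tE : E → Fin n) (w : E → ℝ) :
    Matrix E (Fin n) ℝ :=
  fun e k => if k = sE e then Real.sqrt (w e) else if k = tE e then -Real.sqrt (w e) else 0

/-- Weighted graph Laplacian `L(a) = Dᵀ Θ(a) D` with `Θ(a)` diagonal with entries
`(a_i + a_j)/2` on edges. -/
noncomputable def Lw {n : ℕ} {E : Type} [Fintype E] [DecidableEq E] (sE tE : E → Fin n) (w : E → ℝ)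
    (a : Fin n → ℝ) : Matrix (Fin n) (Fin n) ℝ :=
  (gradMat sE tE w)ᵀ * Matrix.diagonal (fun e => (a (sE e) + a (tE e)) / 2) * gradMat sE tE w

/-- `B` is the Moore–Penrose pseudoinverse of `A` (the four Penrose conditions). -/
def IsPInv {n : ℕ} (A B : Matrix (Fin n) (Fin n) ℝ) : Prop :=
  A * B * A = A ∧ B * A * B = B ∧ (A * B)ᵀ = A * B ∧ (B * A)ᵀ = B * A

/-- Vertex-wise circle product of the gradient fields of two potentials:
`(∇_GΦ ∘ ∇_GΨ)_i = (1/2)·Σ_{j ∈ N(i)} ω_{ij}(Φ_i − Φ_j)(Ψ_i − Ψ_j)`. -/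
noncomputable def circ {n : ℕ} {E : Type} [Fintype E] (sE tE : E → Fin n) (w : E → ℝ)
    (Φ Ψ : Fin n → ℝ) : Fin n → ℝ :=
  fun i => (1 / 2) *
    ∑ e : E, (if sE e = i ∨ tE e = i then
      w e * (Φ (sE e) - Φ (tE e)) * (Ψ (sE e) - Ψ (tE e)) else 0)

/-- The normalized all-ones vector `u₀ = (1/√n)(1,…,1)ᵀ`. -/
noncomputable def onesVec (n : ℕ) : Fin n → ℝ := fun _ => 1 / Real.sqrt n

/-- Hessian operator identity: the Riemannian Hessian
`Hess_W F(σ₁,σ₂) = σ₂(g_W(σ₁,∇_WF)) − g_W(∇^W_{σ₂}σ₁, ∇_WF)` equals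
`σ₁ᵀ d²F σ₂ + (1/2){dFᵀL(σ₁)L^†σ₂ + dFᵀL(σ₂)L^†σ₁ − dFᵀL(ρ)(∇L^†σ₁∘∇L^†σ₂)}`. -/
private lemma differentiableAt_det' {m : Type*} [Fintype m] [DecidableEq m]
    {N : ℝ → Matrix m m ℝ} {t₀ : ℝ}
    (h : ∀ i j, DifferentiableAt ℝ (fun t => N t i j) t₀) :
    DifferentiableAt ℝ (fun t => (N t).det) t₀ := by
  simp only [Matrix.det_apply']
  exact DifferentiableAt.fun_sum fun σ _ =>
    (DifferentiableAt.fun_finsetProd fun i _ => h (σ i) i).const_mul _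

theorem wasserstein_hessian_identity
    {n : ℕ} {E : Type} [Fintype E] [DecidableEq E]
    (sE tE : E → Fin n) (w : E → ℝ)
    (hw : ∀ e, 0 < w e)
    (hconn : ∀ Φ : Fin n → ℝ, (∀ e, Φ (sE e) = Φ (tE e)) → ∀ i j, Φ i = Φ j)
    (ρ : Fin n → ℝ) (hρ : ∀ i, 0 < ρ i) (hsum : ∑ i, ρ i = 1)
    (Ldag : Matrix (Fin n) (Fin n) ℝ) (hpinv : IsPInv (Lw sE tE w ρ) Ldag)
    (hker : ∀ Φ : Fin n → ℝ, Lw sE tE w ρ *ᵥ Φ = 0 ↔ ∃ c : ℝ, ∀ i, Φ i = c)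
    (F : (Fin n → ℝ) → ℝ) (hF : ContDiff ℝ 2 F)
    (dF : (Fin n → ℝ) → Fin n → ℝ) (hdFsm : ContDiff ℝ 1 dF)
    (hdF : ∀ μ : Fin n → ℝ, ∀ i : Fin n,
      HasDerivAt (fun s => F (Function.update μ i s)) (dF μ i) (μ i))
    (σ₁ σ₂ : Fin n → ℝ) (h1 : ∑ i, σ₁ i = 0) (h2 : ∑ i, σ₂ i = 0)
    (H : Matrix (Fin n) (Fin n) ℝ) (hHsym : H.IsSymm)
    -- H is the Euclidean Hessian of F at ρ: the derivative of dF in direction σ₂ is Hσ₂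
    (hH : HasDerivAt (fun t : ℝ => dF (ρ + t • σ₂)) (H *ᵥ σ₂) 0)
    (Gdir : ℝ → Matrix (Fin n) (Fin n) ℝ) (ε : ℝ) (hε : 0 < ε)
    -- Gdir t = g(ρ + tσ₂) is the inverse of L(ρ+tσ₂)+u₀u₀ᵀ, i.e. L(ρ+tσ₂)^†+u₀u₀ᵀ
    (hGdir : ∀ t : ℝ, |t| < ε →
      Gdir t * (Lw sE tE w (ρ + t • σ₂) + vecMulVec (onesVec n) (onesVec n)) = 1 ∧
      (Lw sE tE w (ρ + t • σ₂) + vecMulVec (onesVec n) (onesVec n)) * Gdir t = 1) :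
    -- Hess_W F(σ₁,σ₂) = σ₂(g_W(σ₁,∇_WF)) − g_W(∇^W_{σ₂}σ₁, ∇_WF)
    deriv (fun t : ℝ => σ₁ ⬝ᵥ (Gdir t *ᵥ
        (Lw sE tE w (ρ + t • σ₂) *ᵥ dF (ρ + t • σ₂)))) 0 -
      (-(1/2 : ℝ) • (Lw sE tE w σ₂ *ᵥ (Ldag *ᵥ σ₁) + Lw sE tE w σ₁ *ᵥ (Ldag *ᵥ σ₂)) +
        (1/2 : ℝ) • (Lw sE tE w ρ *ᵥ circ sE tE w (Ldag *ᵥ σ₁) (Ldag *ᵥ σ₂)))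
        ⬝ᵥ (Ldag *ᵥ (Lw sE tE w ρ *ᵥ dF ρ)) =
    σ₁ ⬝ᵥ (H *ᵥ σ₂) +
      (1/2 : ℝ) * (dF ρ ⬝ᵥ (Lw sE tE w σ₁ *ᵥ (Ldag *ᵥ σ₂)) +
        dF ρ ⬝ᵥ (Lw sE tE w σ₂ *ᵥ (Ldag *ᵥ σ₁)) -
        dF ρ ⬝ᵥ (Lw sE tE w ρ *ᵥ circ sE tE w (Ldag *ᵥ σ₁) (Ldag *ᵥ σ₂))) := by
  classical
  set u₀ : Fin n → ℝ := onesVec n with hu₀def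
  set P : Matrix (Fin n) (Fin n) ℝ := vecMulVec u₀ u₀ with hPdef
  set L₀ : Matrix (Fin n) (Fin n) ℝ := Lw sE tE w ρ with hL₀def
  set M : Matrix (Fin n) (Fin n) ℝ := Lw sE tE w σ₂ with hMdef
  set L₁ : Matrix (Fin n) (Fin n) ℝ := Lw sE tE w σ₁ with hL₁def
  have hn : 0 < n := by
    rcases Nat.eq_zero_or_pos n with h | h
    · subst h; simp at hsum
    · exact h
  have hsqn : (0:ℝ) < Real.sqrt n := Real.sqrt_pos.mpr (by exact_mod_cast hn)
  -- linearity of Lw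
  have hLlin : ∀ t : ℝ, Lw sE tE w (ρ + t • σ₂) = L₀ + t • M := by
    intro t
    rw [hL₀def, hMdef]
    unfold Lw
    have hd : Matrix.diagonal (fun e => ((ρ + t • σ₂) (sE e) + (ρ + t • σ₂) (tE e)) / 2)
        = Matrix.diagonal (fun e => (ρ (sE e) + ρ (tE e)) / 2)
          + t • Matrix.diagonal (fun e => (σ₂ (sE e) + σ₂ (tE e)) / 2) := by
      ext i j
      rcases eq_or_ne i j with h | h
      · subst h
        simp only [Matrix.diagonal_apply_eq, Matrix.add_apply, Matrix.smul_apply,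
          Pi.add_apply, Pi.smul_apply, smul_eq_mul]
        ring
      · simp [Matrix.diagonal_apply_ne _ h]
    rw [hd, Matrix.mul_add, Matrix.add_mul, Matrix.mul_smul, Matrix.smul_mul]
  -- symmetry of Lw
  have hLsym : ∀ a : Fin n → ℝ, (Lw sE tE w a)ᵀ = Lw sE tE w a := by
    intro a
    unfold Lw
    rw [Matrix.transpose_mul, Matrix.transpose_mul, Matrix.transpose_transpose,
      Matrix.diagonal_transpose, ← Matrix.mul_assoc]
  -- no self loops
  have hloops : ∀ e, sE e ≠ tE e := by
    intro e he
    have hone : L₀ *ᵥ (fun _ => (1:ℝ)) = 0 := (hker _).mpr ⟨1, fun _ => rfl⟩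
    have hzero : (fun _ => (1:ℝ)) ⬝ᵥ (L₀ *ᵥ (fun _ => (1:ℝ))) = 0 := by rw [hone]; simp
    set g : E → ℝ := gradMat sE tE w *ᵥ (fun _ => (1:ℝ)) with hgdef
    have hexp : (fun _ => (1:ℝ)) ⬝ᵥ (L₀ *ᵥ (fun _ => (1:ℝ)))
        = ∑ e' : E, g e' * (((ρ (sE e') + ρ (tE e')) / 2) * g e') := by
      rw [hL₀def]
      show (fun _ => (1:ℝ)) ⬝ᵥ
        (((gradMat sE tE w)ᵀ * Matrix.diagonal (fun e' => (ρ (sE e') + ρ (tE e')) / 2)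
          * gradMat sE tE w) *ᵥ (fun _ => (1:ℝ))) = _
      rw [Matrix.mul_assoc, ← Matrix.mulVec_mulVec, ← Matrix.mulVec_mulVec,
        Matrix.dotProduct_mulVec, Matrix.vecMul_transpose, ← hgdef]
      simp only [dotProduct]
      exact Finset.sum_congr rfl fun e' _ => by rw [Matrix.mulVec_diagonal]
    rw [hexp] at hzero
    have hnneg : ∀ e' : E, e' ∈ Finset.univ →
        (0:ℝ) ≤ g e' * (((ρ (sE e') + ρ (tE e')) / 2) * g e') := by
      intro e' _
      have hθ : (0:ℝ) ≤ (ρ (sE e') + ρ (tE e')) / 2 := by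
        have := hρ (sE e'); have := hρ (tE e'); linarith
      calc (0:ℝ) ≤ ((ρ (sE e') + ρ (tE e')) / 2) * (g e' * g e') :=
        mul_nonneg hθ (mul_self_nonneg _)
      _ = g e' * (((ρ (sE e') + ρ (tE e')) / 2) * g e') := by ring
    have hterm := (Finset.sum_eq_zero_iff_of_nonneg hnneg).mp hzero e (Finset.mem_univ e)
    have hge : g e = Real.sqrt (w e) := by
      rw [hgdef]
      simp only [Matrix.mulVec, dotProduct, gradMat, mul_one]
      have hcong : ∀ k : Fin n,
          (if k = sE e then Real.sqrt (w e) else if k = tE e then -Real.sqrt (w e) else 0)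
          = if k = sE e then Real.sqrt (w e) else 0 := by
        intro k
        by_cases hk : k = sE e
        · simp [hk]
        · have hk' : ¬ k = tE e := fun hh => hk (hh.trans he.symm)
          simp [hk, hk']
      rw [Finset.sum_congr rfl fun k _ => hcong k]
      rw [Finset.sum_ite_eq' Finset.univ (sE e) (fun _ => Real.sqrt (w e))]
      simp
    rw [hge] at hterm
    have hθpos : (0:ℝ) < (ρ (sE e) + ρ (tE e)) / 2 := by
      have := hρ (sE e); have := hρ (tE e); linarith
    have hwpos : (0:ℝ) < Real.sqrt (w e) := Real.sqrt_pos.mpr (hw e)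
    have hpos := mul_pos hwpos (mul_pos hθpos hwpos)
    linarith
  -- gradMat kills constants
  have hDconst : ∀ c : ℝ, gradMat sE tE w *ᵥ (fun _ => c) = 0 := by
    intro c
    funext e
    simp only [Matrix.mulVec, dotProduct, gradMat, Pi.zero_apply]
    have hcong : ∀ k : Fin n,
        (if k = sE e then Real.sqrt (w e) else if k = tE e then -Real.sqrt (w e) else 0) * c
        = (if k = sE e then Real.sqrt (w e) * c else 0)
          + (if k = tE e then -(Real.sqrt (w e) * c) else 0) := by
      intro k
      by_cases h1 : k = sE e
      · have h2 : ¬ k = tE e := fun hh => hloops e (h1.symm.trans hh)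
        simp [h1, h2, hloops e]
      · by_cases h2 : k = tE e <;> simp [h1, h2, Ne.symm (hloops e)] <;> ring
    rw [Finset.sum_congr rfl fun k _ => hcong k, Finset.sum_add_distrib,
      Finset.sum_ite_eq' Finset.univ (sE e) (fun _ => Real.sqrt (w e) * c),
      Finset.sum_ite_eq' Finset.univ (tE e) (fun _ => -(Real.sqrt (w e) * c))]
    simp
  -- Lw kills constants
  have hLconst : ∀ a : Fin n → ℝ, ∀ c : ℝ, Lw sE tE w a *ᵥ (fun _ => c) = 0 := by
    intro a c
    unfold Lw
    rw [Matrix.mul_assoc, ← Matrix.mulVec_mulVec, ← Matrix.mulVec_mulVec, hDconst c]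
    simp
  have hLu₀ : ∀ a : Fin n → ℝ, Lw sE tE w a *ᵥ u₀ = 0 := fun a => hLconst a _
  have hu₀vecMul : ∀ a : Fin n → ℝ, u₀ ᵥ* Lw sE tE w a = 0 := by
    intro a
    rw [← hLsym a, Matrix.vecMul_transpose, hLu₀ a]
  -- P basic facts
  have hPmulVec : ∀ x : Fin n → ℝ, P *ᵥ x = (u₀ ⬝ᵥ x) • u₀ := by
    intro x
    funext i
    simp only [hPdef, Matrix.mulVec, dotProduct, Matrix.vecMulVec_apply,
      Pi.smul_apply, smul_eq_mul]
    rw [Finset.sum_mul]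
    exact Finset.sum_congr rfl fun j _ => by ring
  have hu₀u₀ : u₀ ⬝ᵥ u₀ = 1 := by
    simp only [dotProduct, hu₀def, onesVec]
    rw [Finset.sum_const, Finset.card_univ, Fintype.card_fin]
    rw [div_mul_div_comm, one_mul, Real.mul_self_sqrt (by positivity)]
    rw [nsmul_eq_mul, mul_one_div_cancel (Nat.cast_pos.mpr hn).ne']
  have hσ₁u₀ : σ₁ ⬝ᵥ u₀ = 0 := by
    simp only [dotProduct, hu₀def, onesVec]
    rw [← Finset.sum_mul, h1, zero_mul]
  have hσ₁P : ∀ x : Fin n → ℝ, σ₁ ⬝ᵥ (P *ᵥ x) = 0 := by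
    intro x
    rw [hPmulVec, dotProduct_smul, smul_eq_mul, hσ₁u₀, mul_zero]
  have hLPv : ∀ a : Fin n → ℝ, ∀ x : Fin n → ℝ, Lw sE tE w a *ᵥ (P *ᵥ x) = 0 := by
    intro a x
    rw [hPmulVec, Matrix.mulVec_smul, hLu₀ a, smul_zero]
  have hmulP : ∀ a : Fin n → ℝ, Lw sE tE w a * P = 0 := by
    intro a
    funext i j
    have h : (Lw sE tE w a * P) i j = (Lw sE tE w a *ᵥ u₀) i * u₀ j := by
      simp only [Matrix.mul_apply, hPdef, Matrix.vecMulVec_apply, Matrix.mulVec,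
        dotProduct, Finset.sum_mul]
      exact Finset.sum_congr rfl fun k _ => by ring
    rw [h, hLu₀ a]
    simp
  have hPmul : ∀ a : Fin n → ℝ, P * Lw sE tE w a = 0 := by
    intro a
    funext i j
    have h : (P * Lw sE tE w a) i j = u₀ i * (u₀ ᵥ* Lw sE tE w a) j := by
      simp only [Matrix.mul_apply, hPdef, Matrix.vecMulVec_apply, Matrix.vecMul,
        dotProduct, Finset.mul_sum]
      exact Finset.sum_congr rfl fun k _ => by ring
    rw [h, hu₀vecMul a]
    simp
  have hPP : P * P = P := by
    funext i j
    simp only [Matrix.mul_apply, hPdef, Matrix.vecMulVec_apply]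
    have h : ∑ k, u₀ i * u₀ k * (u₀ k * u₀ j) = (u₀ ⬝ᵥ u₀) * (u₀ i * u₀ j) := by
      simp only [dotProduct, Finset.sum_mul]
      exact Finset.sum_congr rfl fun k _ => by ring
    rw [h, hu₀u₀, one_mul]
  -- specialized
  have hmulPρ : L₀ * P = 0 := by rw [hL₀def]; exact hmulP ρ
  have hPmulρ : P * L₀ = 0 := by rw [hL₀def]; exact hPmul ρ
  obtain ⟨pinv1, pinv2, pinv3, pinv4⟩ := hpinv
  have hL₀sym : L₀ᵀ = L₀ := by rw [hL₀def]; exact hLsym ρ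
  have hLu₀ρ : L₀ *ᵥ u₀ = 0 := by rw [hL₀def]; exact hLu₀ ρ
  -- key projection lemma
  have hkey : ∀ Q : Matrix (Fin n) (Fin n) ℝ,
      Q * L₀ = 0 → Qᵀ = Q → Q *ᵥ u₀ = u₀ → Q = P := by
    intro Q hQL hQsym hQu
    have hLQ : L₀ * Q = 0 := by
      have h := congrArg Matrix.transpose hQL
      rwa [Matrix.transpose_mul, Matrix.transpose_zero, hQsym, hL₀sym] at h
    have hcol : ∀ j, ∃ c : ℝ, ∀ k, Q k j = c := by
      intro j
      apply (hker _).mp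
      funext i
      have h : (L₀ *ᵥ fun k => Q k j) i = (L₀ * Q) i j := by
        simp [Matrix.mulVec, Matrix.mul_apply, dotProduct]
      rw [h, hLQ]
      simp
    choose c hc using hcol
    have hsymE : ∀ i j, Q i j = Q j i := by
      intro i j
      have h := congrFun (congrFun hQsym j) i
      rwa [Matrix.transpose_apply] at h
    have hcc : ∀ i j : Fin n, c i = c j := by
      intro i j
      rw [← hc i j, ← hc j i, hsymE]
    have hci : ∀ i : Fin n, c i = 1 / n := by
      intro i
      have h := congrFun hQu i
      simp only [Matrix.mulVec, dotProduct, hu₀def, onesVec] at h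
      have hsum' : ∑ j, Q i j * (1 / Real.sqrt n) = (n:ℝ) * (c i * (1 / Real.sqrt n)) := by
        rw [Finset.sum_congr rfl fun j _ => by rw [hc j i, hcc j i]]
        rw [Finset.sum_const, Finset.card_univ, Fintype.card_fin, nsmul_eq_mul]
      rw [hsum'] at h
      have hn' : (0:ℝ) < n := by exact_mod_cast hn
      have h' : ((n:ℝ) * c i) * (1 / Real.sqrt n) = 1 * (1 / Real.sqrt n) := by
        linear_combination h
      have h'' := mul_right_cancel₀
        (ne_of_gt (by positivity : (0:ℝ) < 1 / Real.sqrt n)) h'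
      rw [eq_div_iff (ne_of_gt hn')]
      linarith
    funext i j
    rw [hc j i, hci j, hPdef, Matrix.vecMulVec_apply, hu₀def]
    simp only [onesVec]
    rw [div_mul_div_comm, one_mul, Real.mul_self_sqrt (by positivity)]
  have hLLdag : L₀ * Ldag = 1 - P := by
    have hQ := hkey (1 - L₀ * Ldag) ?_ ?_ ?_
    · linear_combination (norm := abel) -hQ
    · rw [Matrix.sub_mul, Matrix.one_mul, pinv1, sub_self]
    · rw [Matrix.transpose_sub, Matrix.transpose_one, pinv3]
    · rw [Matrix.sub_mulVec, Matrix.one_mulVec, ← pinv3, Matrix.transpose_mul, hL₀sym,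
        ← Matrix.mulVec_mulVec, hLu₀ρ, Matrix.mulVec_zero, sub_zero]
  have hLdagL : Ldag * L₀ = 1 - P := by
    have hQ := hkey (1 - Ldag * L₀) ?_ ?_ ?_
    · linear_combination (norm := abel) -hQ
    · have hL0Q : L₀ * (1 - Ldag * L₀) = 0 := by
        rw [Matrix.mul_sub, Matrix.mul_one, ← Matrix.mul_assoc, pinv1, sub_self]
      have h := congrArg Matrix.transpose hL0Q
      rwa [Matrix.transpose_mul, Matrix.transpose_zero, Matrix.transpose_sub,
        Matrix.transpose_one, pinv4, hL₀sym] at h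
    · rw [Matrix.transpose_sub, Matrix.transpose_one, pinv4]
    · rw [Matrix.sub_mulVec, Matrix.one_mulVec, ← Matrix.mulVec_mulVec, hLu₀ρ,
        Matrix.mulVec_zero, sub_zero]
  have hPLdag : P * Ldag = 0 := by
    have h : (1 - P) * Ldag = Ldag := by
      rw [← hLdagL, Matrix.mul_assoc, ← Matrix.mul_assoc, pinv2]
    rw [Matrix.sub_mul, Matrix.one_mul] at h
    linear_combination (norm := abel) -h
  have hLdagP : Ldag * P = 0 := by
    have h : Ldag * (1 - P) = Ldag := by rw [← hLLdag, ← Matrix.mul_assoc, pinv2]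
    rw [Matrix.mul_sub, Matrix.mul_one] at h
    linear_combination (norm := abel) -h
  -- A = L₀ + P and its inverse Ldag + P
  set A : Matrix (Fin n) (Fin n) ℝ := L₀ + P with hAdef
  have hAright : A * (Ldag + P) = 1 := by
    rw [hAdef, Matrix.add_mul, Matrix.mul_add, Matrix.mul_add, hLLdag, hmulPρ, hPLdag, hPP]
    abel
  have hAleft : (Ldag + P) * A = 1 := by
    rw [hAdef, Matrix.mul_add, Matrix.add_mul, Matrix.add_mul, hLdagL, hPmulρ, hLdagP, hPP]
    abel
  have hρ0 : ρ + (0:ℝ) • σ₂ = ρ := by simp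
  have hA0 : Lw sE tE w (ρ + (0:ℝ) • σ₂) + P = A := by
    rw [hρ0, hAdef, hL₀def]
  have hG0A : Gdir 0 * A = 1 := by
    have h := (hGdir 0 (by simpa using hε)).1
    rwa [hA0] at h
  have hAG0 : A * Gdir 0 = 1 := by
    have h := (hGdir 0 (by simpa using hε)).2
    rwa [hA0] at h
  have hG₀ : Gdir 0 = Ldag + P := by
    calc Gdir 0 = Gdir 0 * (A * (Ldag + P)) := by rw [hAright, Matrix.mul_one]
    _ = (Gdir 0 * A) * (Ldag + P) := by rw [Matrix.mul_assoc]
    _ = Ldag + P := by rw [hG0A, Matrix.one_mul]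
  -- Gdir near 0 equals the nonsingular inverse
  have hGt : ∀ t : ℝ, |t| < ε → Gdir t = (A + t • M)⁻¹ := by
    intro t ht
    have h := (hGdir t ht).1
    rw [hLlin t] at h
    have h' : Gdir t * (A + t • M) = 1 := by
      rw [hAdef, show L₀ + P + t • M = L₀ + t • M + P by abel]; exact h
    exact (Matrix.inv_eq_left_inv h').symm
  -- differentiability of entries of Gdir at 0
  have hdetA : A.det ≠ 0 := (Matrix.isUnit_det_of_left_inverse hAleft).ne_zero
  have haffine : ∀ (B C : Matrix (Fin n) (Fin n) ℝ) (i j : Fin n),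
      DifferentiableAt ℝ (fun t : ℝ => (B + t • C) i j) 0 := by
    intro B C i j
    have h : (fun t : ℝ => (B + t • C) i j) = fun t => B i j + t * C i j := by
      funext t; simp [Matrix.add_apply, Matrix.smul_apply, smul_eq_mul]
    rw [h]
    exact (differentiableAt_id.mul (differentiableAt_const _)).const_add _
  have hdetdiff : DifferentiableAt ℝ (fun t : ℝ => (A + t • M).det) 0 :=
    differentiableAt_det' (fun i j => haffine A M i j)
  have hdet0ne : (A + (0:ℝ) • M).det ≠ 0 := by simpa using hdetA
  have hGentry : ∀ i j, DifferentiableAt ℝ (fun t => Gdir t i j) 0 := by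
    intro i j
    have hinv : DifferentiableAt ℝ (fun t : ℝ => ((A + t • M)⁻¹) i j) 0 := by
      have heq : (fun t : ℝ => ((A + t • M)⁻¹) i j)
          = fun t => ((A + t • M).det)⁻¹ * (A + t • M).adjugate i j := by
        funext t
        rw [Matrix.inv_def, Ring.inverse_eq_inv']
        simp [Matrix.smul_apply, smul_eq_mul]
      rw [heq]
      have hadj : DifferentiableAt ℝ (fun t : ℝ => (A + t • M).adjugate i j) 0 := by
        have heq2 : (fun t : ℝ => (A + t • M).adjugate i j)
            = fun t => ((A + t • M).updateRow j (Pi.single i 1)).det := by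
          funext t; rw [Matrix.adjugate_apply]
        rw [heq2]
        apply differentiableAt_det'
        intro k l
        have heq3 : (fun t : ℝ => ((A + t • M).updateRow j (Pi.single i 1)) k l)
            = fun t : ℝ => if k = j then (Pi.single i (1:ℝ) : Fin n → ℝ) l else (A + t • M) k l := by
          funext t; rw [Matrix.updateRow_apply]
        rw [heq3]
        by_cases hkj : k = j
        · simp only [hkj, if_pos rfl]; exact differentiableAt_const _
        · simp only [if_neg hkj]; exact haffine A M k l
      exact (hdetdiff.inv hdet0ne).mul hadj
    have hev : (fun t => Gdir t i j) =ᶠ[nhds (0:ℝ)] fun t : ℝ => ((A + t • M)⁻¹) i j := by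
      have hball : Metric.ball (0:ℝ) ε ∈ nhds (0:ℝ) := Metric.ball_mem_nhds _ hε
      filter_upwards [hball] with t ht
      rw [hGt t (by simpa [Real.dist_eq] using ht)]
    exact hinv.congr_of_eventuallyEq hev
  set G' : Matrix (Fin n) (Fin n) ℝ := fun i j => deriv (fun t => Gdir t i j) 0 with hG'def
  have hG'd : ∀ i j, HasDerivAt (fun t => Gdir t i j) (G' i j) 0 := fun i j =>
    (hGentry i j).hasDerivAt
  -- differentiate the identity to get G'
  have hMP : ∀ x : Fin n → ℝ, M *ᵥ (P *ᵥ x) = 0 := by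
    intro x; rw [hMdef]; exact hLPv σ₂ x
  have hG'val : G' = -(Gdir 0 * M * Gdir 0) := by
    have haff : ∀ (k j : Fin n), HasDerivAt (fun t : ℝ => (A + t • M) k j) (M k j) 0 := by
      intro k j
      have heq : (fun t : ℝ => (A + t • M) k j) = fun t => A k j + t * M k j := by
        funext t; simp [Matrix.add_apply, Matrix.smul_apply, smul_eq_mul]
      rw [heq]
      simpa using ((hasDerivAt_id (0:ℝ)).mul_const (M k j)).const_add (A k j)
    have hGA : G' * A + Gdir 0 * M = 0 := by
      funext i j
      have hev : (fun t : ℝ => ∑ k, Gdir t i k * (A + t • M) k j) =ᶠ[nhds (0:ℝ)]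
          (fun _ => (1 : Matrix (Fin n) (Fin n) ℝ) i j) := by
        have hball : Metric.ball (0:ℝ) ε ∈ nhds (0:ℝ) := Metric.ball_mem_nhds _ hε
        filter_upwards [hball] with t ht
        have h := (hGdir t (by simpa [Real.dist_eq] using ht)).1
        rw [hLlin t] at h
        have h' : Gdir t * (A + t • M) = 1 := by
          rw [hAdef, show L₀ + P + t • M = L₀ + t • M + P by abel]; exact h
        calc ∑ k, Gdir t i k * (A + t • M) k j = (Gdir t * (A + t • M)) i j := by
              rw [Matrix.mul_apply]
        _ = (1 : Matrix (Fin n) (Fin n) ℝ) i j := by rw [h']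
      have hd1 : HasDerivAt (fun t : ℝ => ∑ k, Gdir t i k * (A + t • M) k j)
          (∑ k, (G' i k * (A + (0:ℝ) • M) k j + Gdir 0 i k * M k j)) 0 :=
        HasDerivAt.fun_sum fun k _ => (hG'd i k).mul (haff k j)
      have hd2 : HasDerivAt (fun t : ℝ => ∑ k, Gdir t i k * (A + t • M) k j) 0 0 :=
        (hasDerivAt_const (0:ℝ) _).congr_of_eventuallyEq hev
      have huniq := hd1.unique hd2
      simp only [zero_smul, add_zero] at huniq
      simp only [Matrix.add_apply, Matrix.mul_apply, Matrix.zero_apply]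
      rw [← Finset.sum_add_distrib]
      exact huniq
    have hGAneg : G' * A = -(Gdir 0 * M) := by
      linear_combination (norm := abel) hGA
    calc G' = G' * (A * Gdir 0) := by rw [hAG0, Matrix.mul_one]
    _ = (G' * A) * Gdir 0 := by rw [Matrix.mul_assoc]
    _ = (-(Gdir 0 * M)) * Gdir 0 := by rw [hGAneg]
    _ = -(Gdir 0 * M * Gdir 0) := by rw [Matrix.neg_mul]
  -- derivative of the main function
  set u : ℝ → Fin n → ℝ := fun t => (L₀ + t • M) *ᵥ dF (ρ + t • σ₂) with hudef
  have hu0 : u 0 = L₀ *ᵥ dF ρ := by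
    rw [hudef]; simp only [zero_smul, add_zero, hρ0]
  set w' : Fin n → ℝ := (M *ᵥ dF ρ) + (L₀ *ᵥ (H *ᵥ σ₂)) with hw'def
  have hu' : ∀ k, HasDerivAt (fun t => u t k) (w' k) 0 := by
    intro k
    have heq : (fun t => u t k) = fun t => ∑ j, (L₀ k j + t * M k j) * dF (ρ + t • σ₂) j := by
      funext t
      simp only [hudef, Matrix.mulVec, dotProduct, Matrix.add_apply,
        Matrix.smul_apply, smul_eq_mul]
    rw [heq]
    have hterm : ∀ j : Fin n,
        HasDerivAt (fun t : ℝ => (L₀ k j + t * M k j) * dF (ρ + t • σ₂) j)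
          (M k j * dF ρ j + L₀ k j * (H *ᵥ σ₂) j) 0 := by
      intro j
      have hd := (((hasDerivAt_id (0:ℝ)).mul_const (M k j)).const_add (L₀ k j)).mul
        ((hasDerivAt_pi.mp hH) j)
      simpa [hρ0, Pi.mul_def] using hd
    have hsum := HasDerivAt.fun_sum fun j (_ : j ∈ Finset.univ) => hterm j
    refine hsum.congr_deriv ?_
    rw [hw'def]
    simp only [Pi.add_apply, Matrix.mulVec, dotProduct]
    rw [← Finset.sum_add_distrib]
  have hf : HasDerivAt (fun t : ℝ => σ₁ ⬝ᵥ (Gdir t *ᵥ u t))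
      (σ₁ ⬝ᵥ (G' *ᵥ u 0 + Gdir 0 *ᵥ w')) 0 := by
    have heq : (fun t : ℝ => σ₁ ⬝ᵥ (Gdir t *ᵥ u t))
        = fun t => ∑ i, σ₁ i * ∑ k, Gdir t i k * u t k := by
      funext t; simp [dotProduct, Matrix.mulVec]
    rw [heq]
    have hinner : ∀ i : Fin n, HasDerivAt (fun t => ∑ k, Gdir t i k * u t k)
        (∑ k, (G' i k * u 0 k + Gdir 0 i k * w' k)) 0 :=
      fun i => HasDerivAt.fun_sum fun k _ => (hG'd i k).mul (hu' k)
    have houter := HasDerivAt.fun_sum fun i (_ : i ∈ Finset.univ) => (hinner i).const_mul (σ₁ i)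
    refine houter.congr_deriv ?_
    simp only [dotProduct, Matrix.mulVec, Pi.add_apply]
    exact Finset.sum_congr rfl fun i _ => by rw [Finset.sum_add_distrib]
  have hderiv : deriv (fun t : ℝ => σ₁ ⬝ᵥ (Gdir t *ᵥ
      (Lw sE tE w (ρ + t • σ₂) *ᵥ dF (ρ + t • σ₂)))) 0
      = σ₁ ⬝ᵥ (G' *ᵥ u 0 + Gdir 0 *ᵥ w') := by
    have h : (fun t : ℝ => σ₁ ⬝ᵥ (Gdir t *ᵥ (Lw sE tE w (ρ + t • σ₂) *ᵥ dF (ρ + t • σ₂))))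
        = fun t : ℝ => σ₁ ⬝ᵥ (Gdir t *ᵥ u t) := by
      funext t; rw [hLlin t, hudef]
    rw [h]
    exact hf.deriv
  -- simplify the derivative value
  have hG0L0 : ∀ z : Fin n → ℝ, Gdir 0 *ᵥ (L₀ *ᵥ z) = z - P *ᵥ z := by
    intro z
    rw [Matrix.mulVec_mulVec, hG₀, Matrix.add_mul, hLdagL, hPmulρ]
    rw [Matrix.add_mulVec, Matrix.sub_mulVec, Matrix.one_mulVec]
    simp
  have hderivval : σ₁ ⬝ᵥ (G' *ᵥ u 0 + Gdir 0 *ᵥ w') = σ₁ ⬝ᵥ (H *ᵥ σ₂) := by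
    rw [hu0, hw'def, hG'val]
    have e1 : (-(Gdir 0 * M * Gdir 0)) *ᵥ (L₀ *ᵥ dF ρ) = -(Gdir 0 *ᵥ (M *ᵥ dF ρ)) := by
      rw [Matrix.neg_mulVec]
      congr 1
      rw [← Matrix.mulVec_mulVec (L₀ *ᵥ dF ρ) (Gdir 0 * M) (Gdir 0), hG0L0,
        Matrix.mulVec_sub, ← Matrix.mulVec_mulVec (P *ᵥ dF ρ) (Gdir 0) M, hMP,
        Matrix.mulVec_zero, sub_zero, ← Matrix.mulVec_mulVec]
    have e2 : Gdir 0 *ᵥ (M *ᵥ dF ρ + L₀ *ᵥ (H *ᵥ σ₂))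
        = Gdir 0 *ᵥ (M *ᵥ dF ρ) + (H *ᵥ σ₂ - P *ᵥ (H *ᵥ σ₂)) := by
      rw [Matrix.mulVec_add, hG0L0]
    rw [e1, e2, show -(Gdir 0 *ᵥ (M *ᵥ dF ρ)) + (Gdir 0 *ᵥ (M *ᵥ dF ρ)
        + (H *ᵥ σ₂ - P *ᵥ (H *ᵥ σ₂))) = H *ᵥ σ₂ - P *ᵥ (H *ᵥ σ₂) by abel,
      dotProduct_sub, hσ₁P, sub_zero]
  -- symmetric dot product transfer
  have hsymdot : ∀ (S : Matrix (Fin n) (Fin n) ℝ), Sᵀ = S → ∀ x y : Fin n → ℝ,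
      x ⬝ᵥ (S *ᵥ y) = (S *ᵥ x) ⬝ᵥ y := by
    intro S hS x y
    rw [Matrix.dotProduct_mulVec]
    conv_lhs => rw [← hS, Matrix.vecMul_transpose]
  have hq : Ldag *ᵥ (L₀ *ᵥ dF ρ) = dF ρ - P *ᵥ dF ρ := by
    rw [Matrix.mulVec_mulVec, hLdagL, Matrix.sub_mulVec, Matrix.one_mulVec]
  rw [hderiv, hderivval]
  have hMsym : Mᵀ = M := by rw [hMdef]; exact hLsym σ₂
  have hL₁sym : L₁ᵀ = L₁ := by rw [hL₁def]; exact hLsym σ₁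
  have hL₁P : ∀ x : Fin n → ℝ, L₁ *ᵥ (P *ᵥ x) = 0 := by
    intro x; rw [hL₁def]; exact hLPv σ₁ x
  have hL₀P : ∀ x : Fin n → ℝ, L₀ *ᵥ (P *ᵥ x) = 0 := by
    intro x; rw [hL₀def]; exact hLPv ρ x
  have key : ∀ S : Matrix (Fin n) (Fin n) ℝ, Sᵀ = S → (∀ x, S *ᵥ (P *ᵥ x) = 0) →
      ∀ y : Fin n → ℝ,
      (S *ᵥ y) ⬝ᵥ (Ldag *ᵥ (L₀ *ᵥ dF ρ)) = dF ρ ⬝ᵥ (S *ᵥ y) := by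
    intro S hS hSP y
    rw [hq, dotProduct_sub]
    have h0 : (S *ᵥ y) ⬝ᵥ (P *ᵥ dF ρ) = 0 := by
      rw [dotProduct_comm, hsymdot S hS (P *ᵥ dF ρ) y, hSP,
        zero_dotProduct]
    rw [h0, sub_zero, dotProduct_comm]
  rw [add_dotProduct, smul_dotProduct, smul_dotProduct,
    add_dotProduct, key M hMsym hMP (Ldag *ᵥ σ₁), key L₁ hL₁sym hL₁P (Ldag *ᵥ σ₂),
    key L₀ hL₀sym hL₀P (circ sE tE w (Ldag *ᵥ σ₁) (Ldag *ᵥ σ₂))]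
  simp only [smul_eq_mul]
  ring
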